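/- Let G be a connected trivalent graph, with to each marking M (an assignment of a sign ± to every vertex) associated a closed oriented surface S_M of genus g(M) obtained by thickening. Then W_{gl(N)}(G) = Σ_M sign(M) · N^{v/2 + 2 − 2g(M)}, where sign(M) is the product of the signs of M and v is the number of vertices. In particular W_{gl(N)}(G) is a polynomial in N of degree at most v/2 + 2. -/

import Mathlib

/-- A finite oriented trivalent graph on vertex set `V`: the darts (half-edges)
are `V × Fin 3` (three darts per vertex, in cyclic order), matched into edges by
a fixed-point-free involution. -/
structure TrivGraph (V : Type*) where
  σ : Equiv.Perm (V × Fin 3)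
  invol : ∀ d, σ (σ d) = d
  nofix : ∀ d, σ d ≠ d

/-- The full contraction `W` of structure constants `f` and inverse metric
tensors `t` along a trivalent graph. -/
noncomputable def W {V ι K : Type*} [Fintype V] [DecidableEq V] [Fintype ι]
    [CommRing K] (G : TrivGraph V) (O : Finset (V × Fin 3))
    (f : ι → ι → ι → K) (t : ι → ι → K) : K :=
  ∑ ℓ : V × Fin 3 → ι,
    (∏ v : V, f (ℓ (v, 0)) (ℓ (v, 1)) (ℓ (v, 2))) * ∏ d ∈ O, t (ℓ d) (ℓ (G.σ d))

/-- The structure constants of `gl(N)` in the basis of elementary matrices: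
`f_{(ij)(kl)(mn)} = δ_{jk}δ_{lm}δ_{ni} − δ_{nk}δ_{li}δ_{jm}`. -/
def fgl (N : ℕ) (p q r : Fin N × Fin N) : ℝ :=
  (if p.2 = q.1 then (1 : ℝ) else 0) * (if q.2 = r.1 then 1 else 0) *
      (if r.2 = p.1 then 1 else 0) -
    (if r.2 = q.1 then (1 : ℝ) else 0) * (if q.2 = p.1 then 1 else 0) *
      (if p.2 = r.1 then 1 else 0)

/-- The inverse metric of `gl(N)` for the trace form: `t^{(ij)(kl)} = δ_{jk}δ_{il}`. -/
def tgl (N : ℕ) (p q : Fin N × Fin N) : ℝ :=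
  (if p.2 = q.1 then (1 : ℝ) else 0) * (if p.1 = q.2 then 1 else 0)

/-- Local rotation of the darts at each vertex: counterclockwise at vertices
marked `+` (`true`) and clockwise at vertices marked `−` (`false`). -/
def rot {V : Type*} (m : V → Bool) : Equiv.Perm (V × Fin 3) where
  toFun d := (d.1, d.2 + if m d.1 then 1 else 2)
  invFun d := (d.1, d.2 - if m d.1 then 1 else 2)
  left_inv d := by cases d; simp
  right_inv d := by cases d; simp

/-- The setoid on darts whose classes are the cycles of a permutation. -/
def cycleSetoid {D : Type*} (β : Equiv.Perm D) : Setoid D :=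
  ⟨β.SameCycle, ⟨fun x => Equiv.Perm.SameCycle.refl β x, fun h => h.symm,
    fun h h' => h.trans h'⟩⟩

/-- The number of boundary components of the thickening `T_M` of `G` determined
by a marking `m`: the number of cycles of the boundary permutation (edge
involution followed by the local rotations). -/
noncomputable def boundaryComponents {V : Type*} (G : TrivGraph V)
    (m : V → Bool) : ℕ :=
  Nat.card (Quotient (cycleSetoid (G.σ.trans (rot m))))

section Toolkit

open Relation Equiv

variable {D : Type*}

/-- An equivalence relation containing the graph of `π` contains the graph of all `π^k`. -/
lemma rel_zpow (π : Equiv.Perm D) (R : D → D → Prop) (hE : Equivalence R)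
    (h : ∀ x, R x (π x)) : ∀ (k : ℤ) (x : D), R x ((π ^ k) x) := by
  have hnat : ∀ (k : ℕ) (x : D), R x ((π ^ k) x) := by
    intro k
    induction k with
    | zero => intro x; simpa using hE.refl x
    | succ n ih =>
      intro x
      have : (π ^ (n + 1)) x = π ((π ^ n) x) := by
        rw [pow_succ']; rfl
      rw [this]; exact hE.trans (ih x) (h _)
  intro k x
  rcases k with (k | k)
  · exact hnat k x
  · rw [zpow_negSucc]
    set y := ((π ^ (k + 1))⁻¹) x with hy
    have : (π ^ (k + 1)) y = x := by simp [hy]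
    exact hE.symm (this ▸ hnat (k + 1) y)

lemma sameCycle_rel (π : Equiv.Perm D) (R : D → D → Prop) (hE : Equivalence R)
    (h : ∀ x, R x (π x)) {x y : D} (hsc : π.SameCycle x y) : R x y := by
  obtain ⟨k, hk⟩ := hsc
  exact hk ▸ rel_zpow π R hE h k x

lemma eqvGen_factor {r s : D → D → Prop} (h : ∀ x y, r x y → Quot.mk s x = Quot.mk s y)
    {x y : D} (he : EqvGen r x y) : Quot.mk s x = Quot.mk s y := by
  induction he with
  | rel u w huw => exact h u w huw
  | refl u => rfl
  | symm u w _ ih => exact ih.symm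
  | trans u v w _ _ ih1 ih2 => exact ih1.trans ih2

lemma quot_card_le_of_factor [Finite D] {r s : D → D → Prop}
    (h : ∀ x y, r x y → Quot.mk s x = Quot.mk s y) :
    Nat.card (Quot s) ≤ Nat.card (Quot r) := by
  refine Nat.card_le_card_of_surjective (Quot.lift (Quot.mk s) h) ?_
  intro q
  induction q using Quot.ind with
  | _ z => exact ⟨Quot.mk r z, rfl⟩

lemma eqvGen_sup_pair {r : D → D → Prop} {a b x y : D}
    (h : EqvGen (fun u w => r u w ∨ (u = a ∧ w = b)) x y) :
    EqvGen r x y ∨ (EqvGen r x a ∧ EqvGen r b y) ∨ (EqvGen r x b ∧ EqvGen r a y) := by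
  induction h with
  | rel u w huw =>
    rcases huw with huw | ⟨rfl, rfl⟩
    · exact Or.inl (EqvGen.rel _ _ huw)
    · exact Or.inr (Or.inl ⟨EqvGen.refl _, EqvGen.refl _⟩)
  | refl u => exact Or.inl (EqvGen.refl u)
  | symm u w _ ih =>
    rcases ih with h1 | ⟨h1, h2⟩ | ⟨h1, h2⟩
    · exact Or.inl h1.symm
    · exact Or.inr (Or.inr ⟨h2.symm, h1.symm⟩)
    · exact Or.inr (Or.inl ⟨h2.symm, h1.symm⟩)
  | trans u v w _ _ ih1 ih2 =>
    rcases ih1 with h1 | ⟨h1, h2⟩ | ⟨h1, h2⟩ <;>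
      rcases ih2 with h3 | ⟨h3, h4⟩ | ⟨h3, h4⟩
    · exact Or.inl (h1.trans _ _ _ h3)
    · exact Or.inr (Or.inl ⟨h1.trans _ _ _ h3, h4⟩)
    · exact Or.inr (Or.inr ⟨h1.trans _ _ _ h3, h4⟩)
    · exact Or.inr (Or.inl ⟨h1, h2.trans _ _ _ h3⟩)
    · exact Or.inl ((h1.trans _ _ _ (EqvGen.symm _ _ (h2.trans _ _ _ h3))).trans _ _ _ h4)
    · exact Or.inl (h1.trans _ _ _ h4)
    · exact Or.inr (Or.inr ⟨h1, h2.trans _ _ _ h3⟩)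
    · exact Or.inl (h1.trans _ _ _ h4)
    · exact Or.inl ((h1.trans _ _ _ (EqvGen.symm _ _ (h2.trans _ _ _ h3))).trans _ _ _ h4)

lemma card_ne_add_one {α : Type*} [Finite α] (c : α) :
    Nat.card α = Nat.card {x : α // x ≠ c} + 1 := by
  classical
  rw [← Finite.card_option]
  exact Nat.card_congr (Equiv.optionSubtypeNe c).symm

lemma quot_card_le_add_pair [Finite D] (r : D → D → Prop) (a b : D) :
    Nat.card (Quot r) ≤ Nat.card (Quot (fun u w => r u w ∨ (u = a ∧ w = b))) + 1 := by
  classical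
  set r' := fun u w => r u w ∨ (u = a ∧ w = b) with hr'
  have hF : ∀ x y, r x y → Quot.mk r' x = Quot.mk r' y := fun x y h =>
    Quot.sound (Or.inl h)
  set g : {q : Quot r // q ≠ Quot.mk r b} → Quot r' :=
    fun p => Quot.lift (Quot.mk r') hF p.1 with hg
  have hginj : Function.Injective g := by
    rintro ⟨q1, h1⟩ ⟨q2, h2⟩ h
    obtain ⟨x, rfl⟩ := Quot.exists_rep q1
    obtain ⟨y, rfl⟩ := Quot.exists_rep q2
    have hxy : Quot.mk r' x = Quot.mk r' y := h
    have := eqvGen_sup_pair (Quot.eqvGen_exact hxy)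
    rcases this with h3 | ⟨h3, h4⟩ | ⟨h3, h4⟩
    · exact Subtype.ext (Quot.eqvGen_sound h3)
    · exact absurd (Quot.eqvGen_sound (EqvGen.symm _ _ h4)) h2
    · exact absurd (Quot.eqvGen_sound h3) h1
  calc Nat.card (Quot r) = Nat.card {q : Quot r // q ≠ Quot.mk r b} + 1 :=
        card_ne_add_one _
    _ ≤ Nat.card (Quot r') + 1 := by
        exact Nat.add_le_add_right (Nat.card_le_card_of_injective g hginj) 1

lemma quot_card_succ_le_of_merge [Finite D] {r s : D → D → Prop} {a b : D}
    (h : ∀ x y, r x y → Quot.mk s x = Quot.mk s y)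
    (hab : Quot.mk s a = Quot.mk s b) (hnab : ¬ EqvGen r a b) :
    Nat.card (Quot s) + 1 ≤ Nat.card (Quot r) := by
  classical
  set g : {q : Quot r // q ≠ Quot.mk r a} → Quot s :=
    fun p => Quot.lift (Quot.mk s) h p.1 with hg
  have hgsurj : Function.Surjective g := by
    intro q
    obtain ⟨z, rfl⟩ := Quot.exists_rep q
    by_cases hz : Quot.mk r z = Quot.mk r a
    · refine ⟨⟨Quot.mk r b, ?_⟩, ?_⟩
      · intro hba
        exact hnab (EqvGen.symm _ _ (Quot.eqvGen_exact hba))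
      · show Quot.mk s b = Quot.mk s z
        rw [← hab]
        exact (eqvGen_factor h (Quot.eqvGen_exact hz)).symm
    · exact ⟨⟨Quot.mk r z, hz⟩, rfl⟩
  calc Nat.card (Quot s) + 1 ≤ Nat.card {q : Quot r // q ≠ Quot.mk r a} + 1 :=
        Nat.add_le_add_right (Nat.card_le_card_of_surjective g hgsurj) 1
    _ = Nat.card (Quot r) := (card_ne_add_one _).symm

lemma quot_card_of_subsingleton_rel [Finite D] {r : D → D → Prop}
    (h : ∀ x y, r x y → x = y) : Nat.card (Quot r) = Nat.card D := by
  refine (Nat.card_eq_of_bijective (Quot.mk r) ⟨?_, fun q => Quot.exists_rep q⟩).symm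
  intro x y hxy
  have := Quot.eqvGen_exact hxy
  have : EqvGen (· = ·) x y := this.mono (fun a b hab => h a b hab)
  exact (Equivalence.eqvGen_iff eq_equivalence).mp this

lemma sameCycle_equivalence (π : Equiv.Perm D) : Equivalence π.SameCycle :=
  ⟨fun x => Equiv.Perm.SameCycle.refl π x, fun h => h.symm, fun h h' => h.trans h'⟩

lemma sameCycle_apply (π : Equiv.Perm D) (x : D) : π.SameCycle x (π x) :=
  ⟨1, by simp⟩

/-- Merging lemma: the cycles of `swap a b * π` refine the relation generated by
the cycles of `π` together with the pair `(a,b)`. -/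
lemma sameCycle_swap_mul [DecidableEq D] {a b : D} (π : Equiv.Perm D) {x y : D}
    (h : (Equiv.swap a b * π).SameCycle x y) :
    EqvGen (fun u w => π.SameCycle u w ∨ (u = a ∧ w = b)) x y := by
  set R := EqvGen (fun u w => π.SameCycle u w ∨ (u = a ∧ w = b)) with hR
  have hE : Equivalence R := EqvGen.is_equivalence _
  have hab : R a b := EqvGen.rel _ _ (Or.inr ⟨rfl, rfl⟩)
  refine sameCycle_rel _ R hE ?_ h
  intro z
  have hz : R z (π z) := EqvGen.rel _ _ (Or.inl (sameCycle_apply π z))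
  have : (Equiv.swap a b * π) z = Equiv.swap a b (π z) := rfl
  rw [this, Equiv.swap_apply_def]
  split_ifs with h1 h2
  · exact hE.trans (h1 ▸ hz) hab
  · exact hE.trans (h2 ▸ hz) (hE.symm hab)
  · exact hz

lemma not_sameCycle_of_fixed {π : Equiv.Perm D} {a b : D} (hfix : π a = a)
    (hne : b ≠ a) : ¬ π.SameCycle a b := by
  intro h
  refine hne ?_
  have := sameCycle_rel π (fun u w => (u = a ↔ w = a))
    ⟨fun x => Iff.rfl, fun h => h.symm, fun h h' => h.trans h'⟩ ?_ h
  · exact this.mp rfl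
  · intro x
    constructor
    · rintro rfl; exact hfix
    · intro hx
      have h2 : π⁻¹ a = a := by conv_lhs => rw [← hfix]; rw [show π⁻¹ (π a) = a from π.symm_apply_apply a]
      have : π⁻¹ (π x) = π⁻¹ a := by rw [hx]
      rw [show π⁻¹ (π x) = x from π.symm_apply_apply x, h2] at this
      exact this

/-- If `a` and `b` lie in different cycles of `π`, then `swap a b * π` joins them. -/
lemma sameCycle_swap_mul_of_not [DecidableEq D] [Finite D] {π : Equiv.Perm D} {a b : D}
    (hab : a ≠ b) (h : ¬ π.SameCycle a b) : (Equiv.swap a b * π).SameCycle a b := by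
  have hex : ∃ k, 0 < k ∧ (π ^ k) a = a := by
    refine ⟨orderOf π, orderOf_pos π, ?_⟩
    rw [pow_orderOf_eq_one]; rfl
  classical
  obtain ⟨m, ⟨hm0, hma⟩, hmin⟩ :
      ∃ m, (0 < m ∧ (π ^ m) a = a) ∧ ∀ j, j < m → ¬(0 < j ∧ (π ^ j) a = a) :=
    ⟨Nat.find hex, Nat.find_spec hex, fun j hj => Nat.find_min hex hj⟩
  set π' := Equiv.swap a b * π with hπ'
  have key : ∀ j, j < m → (π' ^ j) a = (π ^ j) a := by
    intro j
    induction j with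
    | zero => intro _; rfl
    | succ n ih =>
      intro hn
      have hn' : n < m := Nat.lt_of_succ_lt hn
      have h1 : (π' ^ (n + 1)) a = π' ((π' ^ n) a) := by rw [pow_succ']; rfl
      have h2 : (π ^ (n + 1)) a = π ((π ^ n) a) := by rw [pow_succ']; rfl
      rw [h1, ih hn', h2]
      have hne1 : π ((π ^ n) a) ≠ a := by
        intro hc
        exact hmin (n + 1) hn ⟨Nat.succ_pos n, by rw [h2, hc]⟩
      have hne2 : π ((π ^ n) a) ≠ b := by
        intro hc
        exact h ⟨((n : ℕ) + 1 : ℕ), by rw [zpow_natCast, h2, hc]⟩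
      show Equiv.swap a b (π ((π ^ n) a)) = π ((π ^ n) a)
      exact Equiv.swap_apply_of_ne_of_ne hne1 hne2
  obtain ⟨m', rfl⟩ : ∃ m', m = m' + 1 := ⟨m - 1, (Nat.succ_pred_eq_of_pos hm0).symm⟩
  refine ⟨((m' + 1 : ℕ) : ℤ), ?_⟩
  rw [zpow_natCast]
  have h1 : (π' ^ (m' + 1)) a = π' ((π' ^ m') a) := by rw [pow_succ']; rfl
  have h2 : (π ^ (m' + 1)) a = π ((π ^ m') a) := by rw [pow_succ']; rfl
  rw [h1, key m' (Nat.lt_succ_self m')]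
  show Equiv.swap a b (π ((π ^ m') a)) = b
  rw [← h2, hma, Equiv.swap_apply_left]

/-- Multiplying by a swap increases the number of cycles by at most one. -/
lemma ncyc_swap_mul_le [DecidableEq D] [Finite D] (π : Equiv.Perm D) (a b : D) :
    Nat.card (Quot (Equiv.swap a b * π).SameCycle) ≤
      Nat.card (Quot π.SameCycle) + 1 := by
  set π' := Equiv.swap a b * π with hπ'
  set E : D → D → Prop := fun u w => π'.SameCycle u w ∨ (u = a ∧ w = b) with hE
  have h1 : Nat.card (Quot π'.SameCycle) ≤ Nat.card (Quot E) + 1 :=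
    quot_card_le_add_pair _ a b
  have h2 : Nat.card (Quot E) ≤ Nat.card (Quot π.SameCycle) := by
    refine quot_card_le_of_factor ?_
    intro x y hxy
    have : (Equiv.swap a b * π').SameCycle x y := by
      rw [hπ', Equiv.swap_mul_self_mul]; exact hxy
    exact Quot.eqvGen_sound (sameCycle_swap_mul π' this)
  omega

/-- If `a`, `b` lie in different cycles of `π`, multiplying by the swap
decreases the number of cycles (merges the two cycles). -/
lemma ncyc_swap_mul_add_one_le [DecidableEq D] [Finite D] {π : Equiv.Perm D} {a b : D}
    (hab : a ≠ b) (hnot : ¬ π.SameCycle a b) :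
    Nat.card (Quot (Equiv.swap a b * π).SameCycle) + 1 ≤
      Nat.card (Quot π.SameCycle) := by
  set π' := Equiv.swap a b * π with hπ'
  have hjoin : π'.SameCycle a b := sameCycle_swap_mul_of_not hab hnot
  refine quot_card_succ_le_of_merge (a := a) (b := b) ?_ (Quot.sound hjoin) ?_
  · intro x y hxy
    have hgen : EqvGen (fun u w => π'.SameCycle u w ∨ (u = a ∧ w = b)) x y := by
      refine sameCycle_swap_mul π' ?_
      rw [hπ', Equiv.swap_mul_self_mul]
      exact hxy
    refine eqvGen_factor ?_ hgen
    rintro u w (huw | ⟨rfl, rfl⟩)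
    · exact Quot.sound huw
    · exact Quot.sound hjoin
  · rw [Equivalence.eqvGen_iff (sameCycle_equivalence π)]
    exact hnot

/-- Splitting: multiplying `π` by the swap `(a, π a)` increases the cycle count. -/
lemma ncyc_split [DecidableEq D] [Finite D] {π : Equiv.Perm D} {a : D} (ha : π a ≠ a) :
    Nat.card (Quot π.SameCycle) + 1 ≤
      Nat.card (Quot (Equiv.swap a (π a) * π).SameCycle) := by
  set b := π a with hb
  set π₁ := Equiv.swap a b * π with hπ₁
  have hfix : π₁ a = a := by
    rw [hπ₁]
    show Equiv.swap a b (π a) = a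
    rw [← hb, Equiv.swap_apply_right]
  have hnot : ¬ π₁.SameCycle a b := not_sameCycle_of_fixed hfix (by rw [hb]; exact ha)
  refine quot_card_succ_le_of_merge (a := a) (b := b) ?_
    (Quot.sound (sameCycle_apply π a)) ?_
  · intro x y hxy
    have hgen : EqvGen (fun u w => π.SameCycle u w ∨ (u = a ∧ w = b)) x y :=
      sameCycle_swap_mul π hxy
    refine eqvGen_factor ?_ hgen
    rintro u w (huw | ⟨rfl, rfl⟩)
    · exact Quot.sound huw
    · exact Quot.sound (sameCycle_apply π _)
  · rw [Equivalence.eqvGen_iff (sameCycle_equivalence π₁)]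
    exact hnot

/-- The product of a list of swaps. -/
def swapProd [DecidableEq D] (l : List (D × D)) : Equiv.Perm D :=
  (l.map fun p => Equiv.swap p.1 p.2).prod

/-- Every permutation is a product of `n - c(π)` transpositions. -/
lemma swap_decomp [DecidableEq D] [Fintype D] (π : Equiv.Perm D) :
    ∃ l : List (D × D), swapProd l = π ∧
      l.length + Nat.card (Quot π.SameCycle) ≤ Fintype.card D := by
  have main : ∀ (n : ℕ) (π : Equiv.Perm D), π.support.card ≤ n →
      ∃ l : List (D × D), swapProd l = π ∧
        l.length + Nat.card (Quot π.SameCycle) ≤ Fintype.card D := by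
    intro n
    induction n with
    | zero =>
      intro π hπ
      have : π = 1 := by
        rw [← Equiv.Perm.support_eq_empty_iff]
        exact Finset.card_eq_zero.mp (Nat.le_zero.mp hπ)
      subst this
      refine ⟨[], rfl, ?_⟩
      simp only [List.length_nil, Nat.zero_add]
      rw [quot_card_of_subsingleton_rel (fun x y h => Equiv.Perm.sameCycle_one.mp h),
        Nat.card_eq_fintype_card]
    | succ n ih =>
      intro π hπ
      by_cases hid : π = 1
      · subst hid
        refine ⟨[], rfl, ?_⟩
        simp only [List.length_nil, Nat.zero_add]
        rw [quot_card_of_subsingleton_rel (fun x y h => Equiv.Perm.sameCycle_one.mp h),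
          Nat.card_eq_fintype_card]
      · obtain ⟨a, ha⟩ : ∃ a, π a ≠ a := by
          by_contra hc
          push_neg at hc
          exact hid (Equiv.ext hc)
        set π₁ := Equiv.swap a (π a) * π with hπ₁
        have hlt : π₁.support.card < π.support.card :=
          Equiv.Perm.card_support_swap_mul ha
        obtain ⟨l₁, hl₁, hlen₁⟩ := ih π₁ (by omega)
        refine ⟨(a, π a) :: l₁, ?_, ?_⟩
        · show Equiv.swap a (π a) * swapProd l₁ = π
          rw [hl₁, hπ₁, Equiv.swap_mul_self_mul]
        · have hs := ncyc_split ha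
          rw [← hπ₁] at hs
          simp only [List.length_cons]
          omega
  exact main π.support.card π le_rfl

/-- The edge relation of a list of pairs. -/
def edgeRel (l : List (D × D)) : D → D → Prop := fun x y => (x, y) ∈ l

lemma eqvGen_edgeRel_swapProd [DecidableEq D] (l : List (D × D)) (x : D) :
    EqvGen (edgeRel l) x (swapProd l x) := by
  induction l generalizing x with
  | nil => exact EqvGen.refl x
  | cons p l ih =>
    have h1 : EqvGen (edgeRel (p :: l)) x (swapProd l x) :=
      (ih x).mono (fun u w huw => List.mem_cons_of_mem p huw)
    have hstep : EqvGen (edgeRel (p :: l)) (swapProd l x)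
        (Equiv.swap p.1 p.2 (swapProd l x)) := by
      have hpair : EqvGen (edgeRel (p :: l)) p.1 p.2 :=
        EqvGen.rel _ _ (by show (p.1, p.2) ∈ p :: l; simp)
      rw [Equiv.swap_apply_def]
      split_ifs with h1' h2'
      · exact h1' ▸ hpair
      · exact h2' ▸ (EqvGen.symm _ _ hpair)
      · exact EqvGen.refl _
    have : swapProd (p :: l) x = Equiv.swap p.1 p.2 (swapProd l x) := rfl
    rw [this]
    exact (EqvGen.is_equivalence _).trans h1 hstep

lemma sameCycle_swapProd_sub [DecidableEq D] (l : List (D × D)) {x y : D}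
    (h : (swapProd l).SameCycle x y) : EqvGen (edgeRel l) x y :=
  sameCycle_rel _ _ (EqvGen.is_equivalence _) (fun z => eqvGen_edgeRel_swapProd l z) h

/-- The Euler inequality for a product of transpositions:
`c(∏ swaps) + |D| ≤ (number of swaps) + 2 · (number of components of the swap graph)`. -/
lemma euler_ineq [DecidableEq D] [Fintype D] (l : List (D × D)) :
    Nat.card (Quot (swapProd l).SameCycle) + Fintype.card D ≤
      l.length + 2 * Nat.card (Quot (edgeRel l)) := by
  induction l with
  | nil =>
    have h1 : Nat.card (Quot (swapProd ([] : List (D × D))).SameCycle) = Fintype.card D := by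
      rw [show swapProd ([] : List (D × D)) = 1 from rfl,
        quot_card_of_subsingleton_rel (fun x y h => Equiv.Perm.sameCycle_one.mp h),
        Nat.card_eq_fintype_card]
    have h2 : Nat.card (Quot (edgeRel ([] : List (D × D)))) = Fintype.card D := by
      have := quot_card_of_subsingleton_rel (r := edgeRel ([] : List (D × D)))
        (fun x y h => absurd h List.not_mem_nil)
      rw [this, Nat.card_eq_fintype_card]
    rw [h1, h2]
    omega
  | cons p l ih =>
    have hsp : swapProd (p :: l) = Equiv.swap p.1 p.2 * swapProd l := rfl
    -- the edge relation of `p :: l` is the edge relation of `l` plus the pair `p`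
    have hrel : edgeRel (p :: l) =
        fun u w => edgeRel l u w ∨ (u = p.1 ∧ w = p.2) := by
      funext u w
      apply propext
      constructor
      · intro h
        rcases List.mem_cons.mp h with h | h
        · exact Or.inr ⟨congrArg Prod.fst h, congrArg Prod.snd h⟩
        · exact Or.inl h
      · rintro (h | ⟨rfl, rfl⟩)
        · exact List.mem_cons_of_mem p h
        · exact List.mem_cons_self
    have hcomp_le : Nat.card (Quot (edgeRel l)) ≤ Nat.card (Quot (edgeRel (p :: l))) + 1 := by
      rw [hrel]
      exact quot_card_le_add_pair (edgeRel l) p.1 p.2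
    by_cases hc : Quot.mk (edgeRel l) p.1 = Quot.mk (edgeRel l) p.2
    -- the new edge joins points already connected: the component count is unchanged
    · have hcomp : Nat.card (Quot (edgeRel l)) ≤ Nat.card (Quot (edgeRel (p :: l))) := by
        refine quot_card_le_of_factor ?_
        intro x y hxy
        rcases List.mem_cons.mp hxy with h | h
        · have h1 : x = p.1 := congrArg Prod.fst h
          have h2 : y = p.2 := congrArg Prod.snd h
          rw [h1, h2]; exact hc
        · exact Quot.sound h
      have hcyc : Nat.card (Quot (swapProd (p :: l)).SameCycle) ≤
          Nat.card (Quot (swapProd l).SameCycle) + 1 := by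
        rw [hsp]; exact ncyc_swap_mul_le _ _ _
      simp only [List.length_cons]
      omega
    -- the new edge joins two different components
    · have hab : p.1 ≠ p.2 := fun h => hc (h ▸ rfl)
      have hnab : ¬ EqvGen (edgeRel l) p.1 p.2 := fun h => hc (Quot.eqvGen_sound h)
      have hnsc : ¬ (swapProd l).SameCycle p.1 p.2 := fun h =>
        hnab (sameCycle_swapProd_sub l h)
      have hcyc : Nat.card (Quot (swapProd (p :: l)).SameCycle) + 1 ≤
          Nat.card (Quot (swapProd l).SameCycle) := by
        rw [hsp]; exact ncyc_swap_mul_add_one_le hab hnsc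
      simp only [List.length_cons]
      omega

end Toolkit

section Graph

open Relation Equiv
open Fin.NatCast
open Fin.CommRing

variable {V : Type*}

lemma rot_pow (m : V → Bool) (k : ℕ) (x : V × Fin 3) :
    ((rot m) ^ k) x = (x.1, x.2 + (k : Fin 3) * (if m x.1 then 1 else 2)) := by
  induction k with
  | zero => simp
  | succ n ih =>
    have h1 : ((rot m) ^ (n + 1)) x = rot m (((rot m) ^ n) x) := by rw [pow_succ']; rfl
    rw [h1, ih]
    show (x.1, (x.2 + (n : Fin 3) * _) + _) = _
    have : ((n + 1 : ℕ) : Fin 3) = (n : Fin 3) + 1 := by push_cast; ring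
    rw [this]
    ring_nf

lemma rot_sameCycle (m : V → Bool) {x y : V × Fin 3} (h : x.1 = y.1) :
    (rot m).SameCycle x y := by
  obtain ⟨v, i⟩ := x
  obtain ⟨w, j⟩ := y
  obtain rfl : v = w := h
  have key : ∀ (i j s : Fin 3), s = 1 ∨ s = 2 → i + (j - i) * (s * s) = j := by decide
  set s : Fin 3 := if m v then 1 else 2 with hs
  refine ⟨((((j - i) * s).val : ℕ) : ℤ), ?_⟩
  rw [zpow_natCast, rot_pow]
  show (v, i + (((((j - i) * s).val : ℕ) : Fin 3)) * s) = (v, j)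
  rw [Fin.cast_val_eq_self, mul_assoc, key i j s (by rw [hs]; split_ifs <;> simp)]

lemma boundary_le [Fintype V] [DecidableEq V] (G : TrivGraph V)
    (O : Finset (V × Fin 3)) (hO : ∀ d, d ∈ O ↔ G.σ d ∉ O)
    (hconn : ∀ d d' : V × Fin 3,
      Relation.ReflTransGen (fun x y => x.1 = y.1 ∨ G.σ x = y) d d')
    (m : V → Bool) : 2 * boundaryComponents G m ≤ Fintype.card V + 4 := by
  classical
  set ρ : Equiv.Perm (V × Fin 3) := rot m with hρ
  set σ : Equiv.Perm (V × Fin 3) := G.σ with hσ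
  set β : Equiv.Perm (V × Fin 3) := σ.trans ρ with hβdef
  have hβ : β = ρ * σ := rfl
  obtain ⟨lγ, hlγ, hlenγ⟩ := swap_decomp β⁻¹
  obtain ⟨lρ, hlρ, hlenρ⟩ := swap_decomp ρ
  obtain ⟨lσ, hlσ, hlenσ⟩ := swap_decomp σ
  set l : List ((V × Fin 3) × (V × Fin 3)) := lγ ++ lρ ++ lσ with hl
  have hprod : swapProd l = 1 := by
    show (List.map (fun p => Equiv.swap p.1 p.2) (lγ ++ lρ ++ lσ)).prod = 1
    rw [List.map_append, List.map_append, List.prod_append, List.prod_append]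
    show swapProd lγ * swapProd lρ * swapProd lσ = 1
    rw [hlγ, hlρ, hlσ, mul_assoc, ← hβ, inv_mul_cancel]
  -- connectivity: the total swap graph has a single component
  have hmemρ : ∀ p, p ∈ lρ → p ∈ l := by
    intro p hp
    show p ∈ lγ ++ lρ ++ lσ
    simp [hp]
  have hmemσ : ∀ p, p ∈ lσ → p ∈ l := by
    intro p hp
    show p ∈ lγ ++ lρ ++ lσ
    simp [hp]
  have hsub : ∀ x y : V × Fin 3, Quot.mk (edgeRel l) x = Quot.mk (edgeRel l) y := by
    intro x y
    induction hconn x y with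
    | refl => rfl
    | tail _ h2 ih =>
      refine ih.trans ?_
      rcases h2 with h2 | h2
      · have hsc : ρ.SameCycle _ _ := rot_sameCycle m h2
        rw [← hlρ] at hsc
        exact Quot.eqvGen_sound ((sameCycle_swapProd_sub lρ hsc).mono
          (fun u w huw => hmemρ _ huw))
      · have hsc : σ.SameCycle _ _ := ⟨1, by simpa using h2⟩
        rw [← hlσ] at hsc
        exact Quot.eqvGen_sound ((sameCycle_swapProd_sub lσ hsc).mono
          (fun u w huw => hmemσ _ huw))
  have hcomp : Nat.card (Quot (edgeRel l)) ≤ 1 := by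
    refine Finite.card_le_one_iff_subsingleton.mpr ⟨fun q1 q2 => ?_⟩
    obtain ⟨x, rfl⟩ := Quot.exists_rep q1
    obtain ⟨y, rfl⟩ := Quot.exists_rep q2
    exact hsub x y
  have heuler := euler_ineq l
  rw [hprod] at heuler
  have hc1 : Nat.card (Quot (1 : Equiv.Perm (V × Fin 3)).SameCycle)
      = Fintype.card (V × Fin 3) := by
    rw [quot_card_of_subsingleton_rel (fun x y h => Equiv.Perm.sameCycle_one.mp h),
      Nat.card_eq_fintype_card]
  have hlen : l.length = lγ.length + lρ.length + lσ.length := by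
    rw [hl]; simp; omega
  have hcβ : Nat.card (Quot β⁻¹.SameCycle) = Nat.card (Quot β.SameCycle) := by
    have hrel : β⁻¹.SameCycle = β.SameCycle := by
      funext u w
      exact propext Equiv.Perm.sameCycle_inv
    rw [hrel]
  have hb : boundaryComponents G m = Nat.card (Quot β.SameCycle) := rfl
  -- at least `card V` cycles of the rotation
  have hρv : Fintype.card V ≤ Nat.card (Quot ρ.SameCycle) := by
    have hfac : ∀ x y : V × Fin 3, ρ.SameCycle x y → x.1 = y.1 := by
      intro x y hxy
      exact sameCycle_rel ρ (fun u w => u.1 = w.1)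
        ⟨fun _ => rfl, fun h => h.symm, fun h h' => h.trans h'⟩ (fun _ => rfl) hxy
    have hsurj : Function.Surjective (Quot.lift (fun d : V × Fin 3 => d.1) hfac) :=
      fun v => ⟨Quot.mk _ (v, 0), rfl⟩
    have := Nat.card_le_card_of_surjective _ hsurj
    rwa [Nat.card_eq_fintype_card] at this
  -- every cycle of the involution has at most two elements
  have hσ2 : Fintype.card (V × Fin 3) ≤ 2 * Nat.card (Quot σ.SameCycle) := by
    have hinvol : ∀ d, σ (σ d) = d := G.invol
    have hR : ∀ x y : V × Fin 3, σ.SameCycle x y → y = x ∨ y = σ x := by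
      intro x y hxy
      refine sameCycle_rel σ (fun u w => w = u ∨ w = σ u) ⟨fun _ => Or.inl rfl, ?_, ?_⟩
        (fun _ => Or.inr rfl) hxy
      · intro u w h
        rcases h with rfl | h
        · exact Or.inl rfl
        · exact Or.inr (by rw [h, hinvol])
      · intro u v w h1 h2
        rcases h1 with rfl | h1
        · exact h2
        · rcases h2 with rfl | h2
          · exact Or.inr h1
          · exact Or.inl (by rw [h2, h1, hinvol])
    have hinj : Function.Injective
        (fun d : V × Fin 3 => (Quot.mk σ.SameCycle d, decide (d ∈ O))) := by
      intro d d' hdd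
      simp only [Prod.mk.injEq] at hdd
      obtain ⟨h1, h2⟩ := hdd
      have hsc : σ.SameCycle d d' :=
        (Equivalence.eqvGen_iff (sameCycle_equivalence σ)).mp (Quot.eqvGen_exact h1)
      rcases hR d d' hsc with rfl | rfl
      · rfl
      · exfalso
        rw [decide_eq_decide] at h2
        have h3 : d ∈ O ↔ σ d ∉ O := hO d
        tauto
    have hcard := Nat.card_le_card_of_injective _ hinj
    have hbool : Nat.card Bool = 2 := by
      rw [Nat.card_eq_fintype_card]; rfl
    have e1 : Nat.card (V × Fin 3) = Fintype.card (V × Fin 3) := Nat.card_eq_fintype_card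
    have e2 : Nat.card (Quot σ.SameCycle × Bool) = Nat.card (Quot σ.SameCycle) * 2 := by
      rw [Nat.card_prod, hbool]
    rw [e1, e2] at hcard
    omega
  have hD : Fintype.card (V × Fin 3) = Fintype.card V * 3 := by simp
  omega

end Graph


section Part1

open Equiv

variable {V : Type*}

lemma fgl_expand (N : ℕ) (ℓ : V × Fin 3 → Fin N × Fin N) (v : V) :
    fgl N (ℓ (v, 0)) (ℓ (v, 1)) (ℓ (v, 2)) =
      ∑ b : Bool, (if b then (1 : ℝ) else -1) *
        ∏ i : Fin 3, (if (ℓ (v, i)).2 = (ℓ (v, i + (if b then 1 else 2))).1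
          then (1 : ℝ) else 0) := by
  have e01 : (0 : Fin 3) + 1 = 1 := rfl
  have e11 : (1 : Fin 3) + 1 = 2 := rfl
  have e21 : (2 : Fin 3) + 1 = 0 := rfl
  have e02 : (0 : Fin 3) + 2 = 2 := rfl
  have e12 : (1 : Fin 3) + 2 = 0 := rfl
  have e22 : (2 : Fin 3) + 2 = 1 := rfl
  rw [Fintype.sum_bool]
  simp only [Bool.false_eq_true, reduceIte, if_true, if_false, Fin.prod_univ_three,
    e01, e11, e21, e02, e12, e22]
  unfold fgl
  ring

/-- The inner contraction for a fixed marking `m` counts `N` to the number of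
cycles of the boundary permutation. -/
lemma glN_inner_sum [Fintype V] [DecidableEq V] (N : ℕ) (G : TrivGraph V)
    (O : Finset (V × Fin 3)) (hO : ∀ d, d ∈ O ↔ G.σ d ∉ O) (m : V → Bool) :
    ∑ ℓ : V × Fin 3 → Fin N × Fin N,
      (∏ v : V, ∏ i : Fin 3, (if (ℓ (v, i)).2 = (ℓ (rot m (v, i))).1
          then (1 : ℝ) else 0)) *
        ∏ d ∈ O, tgl N (ℓ d) (ℓ (G.σ d)) = (N : ℝ) ^ boundaryComponents G m := by
  classical
  set σ : Equiv.Perm (V × Fin 3) := G.σ with hσ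
  set ρ : Equiv.Perm (V × Fin 3) := rot m with hρ
  set β : Equiv.Perm (V × Fin 3) := σ.trans ρ with hβ
  have hb : boundaryComponents G m = Nat.card (Quot β.SameCycle) := rfl
  -- Step 1: the trace factors recombine into a product over all darts
  have hT : ∀ ℓ : V × Fin 3 → Fin N × Fin N,
      (∏ d ∈ O, tgl N (ℓ d) (ℓ (σ d))) =
      ∏ d : V × Fin 3, (if (ℓ d).2 = (ℓ (σ d)).1 then (1 : ℝ) else 0) := by
    intro ℓ
    have himg : O.image σ = Oᶜ := by
      ext d
      simp only [Finset.mem_image, Finset.mem_compl]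
      constructor
      · rintro ⟨a, ha, rfl⟩
        intro hc
        exact absurd hc ((hO a).mp ha)
      · intro hd
        exact ⟨σ d, (hO (σ d)).mpr (by rw [G.invol]; exact hd), G.invol d⟩
    have hstep : ∀ d, tgl N (ℓ d) (ℓ (σ d)) =
        (if (ℓ d).2 = (ℓ (σ d)).1 then (1 : ℝ) else 0) *
          (if (ℓ (σ d)).2 = (ℓ (σ (σ d))).1 then (1 : ℝ) else 0) := by
      intro d
      unfold tgl
      congr 1
      rw [G.invol d]
      congr 1
      apply propext
      exact eq_comm
    calc (∏ d ∈ O, tgl N (ℓ d) (ℓ (σ d)))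
        = (∏ d ∈ O, (if (ℓ d).2 = (ℓ (σ d)).1 then (1 : ℝ) else 0)) *
            ∏ d ∈ O, (if (ℓ (σ d)).2 = (ℓ (σ (σ d))).1 then (1 : ℝ) else 0) := by
          rw [← Finset.prod_mul_distrib]
          exact Finset.prod_congr rfl (fun d _ => hstep d)
      _ = (∏ d ∈ O, (if (ℓ d).2 = (ℓ (σ d)).1 then (1 : ℝ) else 0)) *
            ∏ d ∈ O.image σ, (if (ℓ d).2 = (ℓ (σ d)).1 then (1 : ℝ) else 0) := by
          congr 1
          exact (Finset.prod_image
            (f := fun d : V × Fin 3 => if (ℓ d).2 = (ℓ (σ d)).1 then (1 : ℝ) else 0)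
            (g := fun d => σ d) (s := O) (fun x _ y _ h => σ.injective h)).symm
      _ = ∏ d : V × Fin 3, (if (ℓ d).2 = (ℓ (σ d)).1 then (1 : ℝ) else 0) := by
          rw [himg]
          exact Finset.prod_mul_prod_compl O _
  -- Step 2: the vertex factors are a product over all darts
  have hA : ∀ ℓ : V × Fin 3 → Fin N × Fin N,
      (∏ v : V, ∏ i : Fin 3, (if (ℓ (v, i)).2 = (ℓ (rot m (v, i))).1
          then (1 : ℝ) else 0)) =
      ∏ d : V × Fin 3, (if (ℓ d).2 = (ℓ (ρ d)).1 then (1 : ℝ) else 0) := by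
    intro ℓ
    rw [Fintype.prod_prod_type]
  -- Step 3: split each label into its two indices
  have hsplit : ∑ ℓ : V × Fin 3 → Fin N × Fin N,
      (∏ d : V × Fin 3, (if (ℓ d).2 = (ℓ (ρ d)).1 then (1 : ℝ) else 0)) *
        ∏ d : V × Fin 3, (if (ℓ d).2 = (ℓ (σ d)).1 then (1 : ℝ) else 0) =
      ∑ x : V × Fin 3 → Fin N, ∑ y : V × Fin 3 → Fin N,
        (∏ d : V × Fin 3, (if y d = x (ρ d) then (1 : ℝ) else 0)) *
          ∏ d : V × Fin 3, (if y d = x (σ d) then (1 : ℝ) else 0) := by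
    rw [← (Equiv.arrowProdEquivProdArrow (V × Fin 3) (fun _ => Fin N) (fun _ => Fin N)).symm.sum_comp]
    rw [Fintype.sum_prod_type]
    rfl
  -- Step 4: sum over `y`
  have hy : ∀ x : V × Fin 3 → Fin N,
      (∑ y : V × Fin 3 → Fin N,
        (∏ d : V × Fin 3, (if y d = x (ρ d) then (1 : ℝ) else 0)) *
          ∏ d : V × Fin 3, (if y d = x (σ d) then (1 : ℝ) else 0)) =
      ∏ d : V × Fin 3, (if x (ρ d) = x (σ d) then (1 : ℝ) else 0) := by
    intro x
    have h1 : ∀ y : V × Fin 3 → Fin N,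
        (∏ d : V × Fin 3, (if y d = x (ρ d) then (1 : ℝ) else 0)) =
        if y = fun d => x (ρ d) then (1 : ℝ) else 0 := by
      intro y
      rw [Finset.prod_boole]
      congr 1
      apply propext
      constructor
      · intro h
        funext d
        exact h d (Finset.mem_univ d)
      · intro h d _
        rw [h]
    calc (∑ y : V × Fin 3 → Fin N,
          (∏ d : V × Fin 3, (if y d = x (ρ d) then (1 : ℝ) else 0)) *
            ∏ d : V × Fin 3, (if y d = x (σ d) then (1 : ℝ) else 0))
        = ∑ y : V × Fin 3 → Fin N, if y = (fun d => x (ρ d)) then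
            (∏ d : V × Fin 3, (if y d = x (σ d) then (1 : ℝ) else 0)) else 0 := by
          refine Finset.sum_congr rfl ?_
          intro y _
          rw [h1 y, ite_mul, one_mul, zero_mul]
      _ = ∏ d : V × Fin 3, (if x (ρ d) = x (σ d) then (1 : ℝ) else 0) := by
          rw [Finset.sum_ite_eq' Finset.univ (fun d => x (ρ d))
            (fun y => ∏ d : V × Fin 3, (if y d = x (σ d) then (1 : ℝ) else 0))]
          simp
  -- Step 5: the condition is invariance along the cycles of `β`
  have hx : ∀ x : V × Fin 3 → Fin N,
      (∏ d : V × Fin 3, (if x (ρ d) = x (σ d) then (1 : ℝ) else 0)) =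
      if (∀ e, x (β e) = x e) then (1 : ℝ) else 0 := by
    intro x
    rw [Finset.prod_boole]
    congr 1
    apply propext
    constructor
    · intro h e
      have := h (σ e) (Finset.mem_univ _)
      rw [G.invol e] at this
      exact this
    · intro h d _
      have := h (σ d)
      have h2 : β (σ d) = ρ d := by
        show ρ (σ (σ d)) = ρ d
        rw [G.invol d]
      rw [h2] at this
      exact this
  -- Step 6: count invariant labellings
  have hcount : (∑ x : V × Fin 3 → Fin N,
      if (∀ e, x (β e) = x e) then (1 : ℝ) else 0) =
      (N : ℝ) ^ Nat.card (Quot β.SameCycle) := by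
    rw [Finset.sum_boole]
    have hcard : (Finset.filter (fun x : V × Fin 3 → Fin N => ∀ e, x (β e) = x e)
        Finset.univ).card = Nat.card (Quot β.SameCycle → Fin N) := by
      rw [← Fintype.card_subtype, ← Nat.card_eq_fintype_card]
      refine Nat.card_congr ?_
      refine { toFun := fun p => Quot.lift p.1 ?_, invFun := fun g =>
        ⟨fun d => g (Quot.mk _ d), ?_⟩, left_inv := ?_, right_inv := ?_ }
      · intro u w huw
        exact sameCycle_rel β (fun u w => p.1 u = p.1 w)
          ⟨fun _ => rfl, fun h => h.symm, fun h h' => h.trans h'⟩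
          (fun z => (p.2 z).symm) huw
      · intro e
        exact congrArg g (Quot.sound (sameCycle_apply β e)).symm
      · intro p
        apply Subtype.ext
        funext d
        rfl
      · intro g
        funext q
        obtain ⟨d, rfl⟩ := Quot.exists_rep q
        rfl
    rw [hcard, Nat.card_fun, Nat.card_eq_fintype_card (α := Fin N), Fintype.card_fin]
    push_cast
    ring
  calc ∑ ℓ : V × Fin 3 → Fin N × Fin N,
      (∏ v : V, ∏ i : Fin 3, (if (ℓ (v, i)).2 = (ℓ (rot m (v, i))).1
          then (1 : ℝ) else 0)) *
        ∏ d ∈ O, tgl N (ℓ d) (ℓ (G.σ d))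
      = ∑ ℓ : V × Fin 3 → Fin N × Fin N,
        (∏ d : V × Fin 3, (if (ℓ d).2 = (ℓ (ρ d)).1 then (1 : ℝ) else 0)) *
          ∏ d : V × Fin 3, (if (ℓ d).2 = (ℓ (σ d)).1 then (1 : ℝ) else 0) := by
        refine Finset.sum_congr rfl ?_
        intro ℓ _
        rw [hA ℓ, hT ℓ]
    _ = ∑ x : V × Fin 3 → Fin N, ∑ y : V × Fin 3 → Fin N,
        (∏ d : V × Fin 3, (if y d = x (ρ d) then (1 : ℝ) else 0)) *
          ∏ d : V × Fin 3, (if y d = x (σ d) then (1 : ℝ) else 0) := hsplit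
    _ = ∑ x : V × Fin 3 → Fin N,
        if (∀ e, x (β e) = x e) then (1 : ℝ) else 0 := by
        refine Finset.sum_congr rfl ?_
        intro x _
        rw [hy x, hx x]
    _ = (N : ℝ) ^ boundaryComponents G m := by rw [hcount, hb]

end Part1

/-- For a connected trivalent graph `G` with `v` vertices,
`W_{gl(N)}(G) = Σ_M sign(M) · N^{b(M)}` where the sum is over all markings `M`
(signs `±` on the vertices), `sign(M)` is the product of the signs, and
`b(M) = v/2 + 2 − 2g(M)` is the number of boundary components of the thickening
`T_M` (equivalently, `g(M)` is the genus of the closed surface `S_M`).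
In particular `b(M) ≤ v/2 + 2`, so `W_{gl(N)}(G)` is a polynomial in `N` of
degree at most `v/2 + 2`. -/
theorem W_gl_eq_sum_over_markings
    (N : ℕ) {V : Type*} [Fintype V] [DecidableEq V]
    (G : TrivGraph V) (O : Finset (V × Fin 3))
    (hO : ∀ d, d ∈ O ↔ G.σ d ∉ O)
    (hconn : ∀ d d' : V × Fin 3,
      Relation.ReflTransGen (fun x y => x.1 = y.1 ∨ G.σ x = y) d d') :
    W G O (fgl N) (tgl N) =
      (∑ m : V → Bool,
        (∏ v : V, if m v then (1 : ℝ) else -1) * (N : ℝ) ^ boundaryComponents G m) ∧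
    ∀ m : V → Bool, 2 * boundaryComponents G m ≤ Fintype.card V + 4 := by
  classical
  refine ⟨?_, fun m => boundary_le G O hO hconn m⟩
  have hexp : ∀ ℓ : V × Fin 3 → Fin N × Fin N,
      (∏ v : V, fgl N (ℓ (v, 0)) (ℓ (v, 1)) (ℓ (v, 2))) =
      ∑ m : V → Bool, ∏ v : V, ((if m v then (1 : ℝ) else -1) *
        ∏ i : Fin 3, (if (ℓ (v, i)).2 = (ℓ (v, i + (if m v then 1 else 2))).1
          then (1 : ℝ) else 0)) := by
    intro ℓ
    calc (∏ v : V, fgl N (ℓ (v, 0)) (ℓ (v, 1)) (ℓ (v, 2)))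
        = ∏ v : V, ∑ b : Bool, ((if b then (1 : ℝ) else -1) *
            ∏ i : Fin 3, (if (ℓ (v, i)).2 = (ℓ (v, i + (if b then 1 else 2))).1
              then (1 : ℝ) else 0)) :=
          Finset.prod_congr rfl (fun v _ => fgl_expand N ℓ v)
      _ = ∑ x ∈ Fintype.piFinset (fun _ : V => (Finset.univ : Finset Bool)),
            ∏ v : V, ((if x v then (1 : ℝ) else -1) *
              ∏ i : Fin 3, (if (ℓ (v, i)).2 = (ℓ (v, i + (if x v then 1 else 2))).1
                then (1 : ℝ) else 0)) := Finset.prod_univ_sum _ _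
      _ = _ := by rw [Fintype.piFinset_univ]
  calc W G O (fgl N) (tgl N)
      = ∑ ℓ : V × Fin 3 → Fin N × Fin N,
          (∑ m : V → Bool, ∏ v : V, ((if m v then (1 : ℝ) else -1) *
            ∏ i : Fin 3, (if (ℓ (v, i)).2 = (ℓ (v, i + (if m v then 1 else 2))).1
              then (1 : ℝ) else 0))) * ∏ d ∈ O, tgl N (ℓ d) (ℓ (G.σ d)) := by
        unfold W
        exact Finset.sum_congr rfl (fun ℓ _ => by rw [hexp ℓ])
    _ = ∑ m : V → Bool, ∑ ℓ : V × Fin 3 → Fin N × Fin N,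
          (∏ v : V, ((if m v then (1 : ℝ) else -1) *
            ∏ i : Fin 3, (if (ℓ (v, i)).2 = (ℓ (v, i + (if m v then 1 else 2))).1
              then (1 : ℝ) else 0))) * ∏ d ∈ O, tgl N (ℓ d) (ℓ (G.σ d)) := by
        rw [Finset.sum_comm]
        exact Finset.sum_congr rfl (fun ℓ _ => Finset.sum_mul _ _ _)
    _ = ∑ m : V → Bool,
        (∏ v : V, if m v then (1 : ℝ) else -1) * (N : ℝ) ^ boundaryComponents G m := by
        refine Finset.sum_congr rfl ?_
        intro m _
        calc (∑ ℓ : V × Fin 3 → Fin N × Fin N,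
            (∏ v : V, ((if m v then (1 : ℝ) else -1) *
              ∏ i : Fin 3, (if (ℓ (v, i)).2 = (ℓ (v, i + (if m v then 1 else 2))).1
                then (1 : ℝ) else 0))) * ∏ d ∈ O, tgl N (ℓ d) (ℓ (G.σ d)))
            = ∑ ℓ : V × Fin 3 → Fin N × Fin N,
              (∏ v : V, if m v then (1 : ℝ) else -1) *
                ((∏ v : V, ∏ i : Fin 3,
                  (if (ℓ (v, i)).2 = (ℓ (rot m (v, i))).1 then (1 : ℝ) else 0)) *
                  ∏ d ∈ O, tgl N (ℓ d) (ℓ (G.σ d))) := by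
              refine Finset.sum_congr rfl ?_
              intro ℓ _
              rw [Finset.prod_mul_distrib, mul_assoc]
              rfl
          _ = (∏ v : V, if m v then (1 : ℝ) else -1) *
              ∑ ℓ : V × Fin 3 → Fin N × Fin N,
                (∏ v : V, ∏ i : Fin 3,
                  (if (ℓ (v, i)).2 = (ℓ (rot m (v, i))).1 then (1 : ℝ) else 0)) *
                  ∏ d ∈ O, tgl N (ℓ d) (ℓ (G.σ d)) := by
              rw [Finset.mul_sum]
          _ = (∏ v : V, if m v then (1 : ℝ) else -1) *
              (N : ℝ) ^ boundaryComponents G m := by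
              rw [glN_inner_sum N G O hO m]
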